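/- arXiv:2303.17113 — 3 statements merged into one kernel-verified Lean document; each statement's English description precedes it below -/
import Mathlib

section
/- (Uniqueness of the effective constant.) Let c : ℝⁿ → ℝ be continuous and ℤⁿ-periodic, and let F(X,p,y) := −tr{(I_n − (p⊗p)/(1+|p|²))X} − c(y)√(1+|p|²). Fix p ∈ ℝⁿ. Suppose v₁, v₂ ∈ C²(ℝⁿ) are ℤⁿ-periodic and there are real numbers μ₁, μ₂ with F(D²v₁, p+Dv₁, y) = μ₁ and F(D²v₂, p+Dv₂, y) = μ₂ for all y ∈ ℝⁿ. Then μ₁ = μ₂. -/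
open Set Filter Topology

noncomputable section

/-- Spatial gradient of `f : ℝⁿ → ℝ` as a Euclidean vector. -/
def sgrad (n : ℕ) (f : EuclideanSpace ℝ (Fin n) → ℝ) (x : EuclideanSpace ℝ (Fin n)) :
    EuclideanSpace ℝ (Fin n) :=
  (EuclideanSpace.equiv (Fin n) ℝ).symm fun i => fderiv ℝ f x (EuclideanSpace.single i 1)

/-- Spatial Hessian of `f : ℝⁿ → ℝ` as an n×n matrix. -/
def shess (n : ℕ) (f : EuclideanSpace ℝ (Fin n) → ℝ) (x : EuclideanSpace ℝ (Fin n)) :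
    Matrix (Fin n) (Fin n) ℝ :=
  fun i j => fderiv ℝ (fun y => fderiv ℝ f y (EuclideanSpace.single j 1)) x
    (EuclideanSpace.single i 1)

/-- The coefficient matrix `a(p) = I_n − (p⊗p)/(1+|p|²)`. -/
def amat (n : ℕ) (p : EuclideanSpace ℝ (Fin n)) : Matrix (Fin n) (Fin n) ℝ :=
  fun i j => (if i = j then (1:ℝ) else 0) - p i * p j / (1 + ‖p‖ ^ 2)

/-- `F(X,p,y) = −tr{a(p)X} − c(y)√(1+|p|²)`. -/
def Fop (n : ℕ) (c : EuclideanSpace ℝ (Fin n) → ℝ) (X : Matrix (Fin n) (Fin n) ℝ)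
    (p y : EuclideanSpace ℝ (Fin n)) : ℝ :=
  -Matrix.trace (amat n p * X) - c y * Real.sqrt (1 + ‖p‖ ^ 2)

/-- `ℤⁿ`-periodicity. -/
def ZPeriodic (n : ℕ) (v : EuclideanSpace ℝ (Fin n) → ℝ) : Prop :=
  ∀ (y : EuclideanSpace ℝ (Fin n)) (k : Fin n → ℤ),
    v (y + (EuclideanSpace.equiv (Fin n) ℝ).symm fun i => (k i : ℝ)) = v y


lemma deriv2_nonpos_of_max {g : ℝ → ℝ} (hg : ContDiff ℝ 2 g) (hmax : ∀ t, g t ≤ g 0) :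
    deriv (deriv g) 0 ≤ 0 := by
  by_contra hcon
  push_neg at hcon
  have hloc : IsLocalMax g 0 := Filter.Eventually.of_forall hmax
  have hd0 : deriv g 0 = 0 := hloc.deriv_eq_zero
  have hdg : ContDiff ℝ 1 (deriv g) := (contDiff_succ_iff_deriv.mp (by exact_mod_cast hg)).2.2
  have hdd : HasDerivAt (deriv g) (deriv (deriv g) 0) 0 :=
    ((hdg.differentiable one_ne_zero) 0).hasDerivAt
  have hslope : Tendsto (slope (deriv g) 0) (𝓝[≠] 0) (𝓝 (deriv (deriv g) 0)) :=
    hasDerivAt_iff_tendsto_slope.mp hdd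
  have hev : ∀ᶠ t in 𝓝[>] (0:ℝ), 0 < slope (deriv g) 0 t := by
    apply (hslope.mono_left (nhdsWithin_mono _ ?_)).eventually (eventually_gt_nhds hcon)
    intro x hx; exact ne_of_gt hx
  have hev2 : ∀ᶠ t in 𝓝[>] (0:ℝ), 0 < deriv g t := by
    filter_upwards [hev, self_mem_nhdsWithin] with t ht ht'
    have : slope (deriv g) 0 t = deriv g t / t := by
      simp [slope, hd0, div_eq_inv_mul]
    rw [this] at ht
    exact (div_pos_iff.mp ht).resolve_right (fun h => absurd h.2 (not_lt.mpr (le_of_lt ht'))) |>.1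
  obtain ⟨δ, hδ, hIoo⟩ := (mem_nhdsGT_iff_exists_Ioo_subset).mp hev2
  have hmono : StrictMonoOn g (Icc 0 δ) := by
    apply strictMonoOn_of_deriv_pos (convex_Icc 0 δ) (hg.continuous.continuousOn)
    intro x hx
    rw [interior_Icc] at hx
    exact hIoo hx
  have h1 : g 0 < g δ := hmono (by constructor <;> simp [le_of_lt (mem_Ioi.mp hδ)]) (by constructor <;> simp [le_of_lt (mem_Ioi.mp hδ)]) hδ
  exact absurd (hmax δ) (not_le.mpr h1)


lemma exists_global_max {n : ℕ} {v : EuclideanSpace ℝ (Fin n) → ℝ} (hv : Continuous v)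
    (hper : ZPeriodic n v) : ∃ y₀, ∀ y, v y ≤ v y₀ := by
  have hK : IsCompact (Icc (0 : Fin n → ℝ) 1) := isCompact_Icc
  have hne : (Icc (0 : Fin n → ℝ) 1).Nonempty := ⟨0, le_refl 0, fun i => zero_le_one⟩
  have hcont : ContinuousOn (fun x : Fin n → ℝ =>
      v ((EuclideanSpace.equiv (Fin n) ℝ).symm x)) (Icc 0 1) :=
    (hv.comp (EuclideanSpace.equiv (Fin n) ℝ).symm.continuous).continuousOn
  obtain ⟨x₀, _, hmax⟩ := hK.exists_isMaxOn hne hcont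
  refine ⟨(EuclideanSpace.equiv (Fin n) ℝ).symm x₀, fun y => ?_⟩
  set k : Fin n → ℤ := fun i => ⌊y i⌋ with hk
  set y' : EuclideanSpace ℝ (Fin n) :=
    y - (EuclideanSpace.equiv (Fin n) ℝ).symm (fun i => (k i : ℝ)) with hy
  have h1 : v y = v y' := by
    have := hper y' k
    rwa [show y' + (EuclideanSpace.equiv (Fin n) ℝ).symm (fun i => ((k i : ℝ))) = y by
      rw [hy]; exact sub_add_cancel _ _] at this
  have h2 : (fun i => y' i) ∈ Icc (0 : Fin n → ℝ) 1 := by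
    constructor <;> intro i <;>
      simp only [hy, PiLp.sub_apply]
    · show (0 : ℝ) ≤ y i - ((k i : ℝ))
      rw [hk, Int.self_sub_floor]
      exact Int.fract_nonneg (y i)
    · show y i - ((k i : ℝ)) ≤ 1
      rw [hk, Int.self_sub_floor]
      exact (Int.fract_lt_one (y i)).le
  have h3 := hmax h2
  rw [h1]
  simpa using h3



lemma shess_eq {n : ℕ} {w : EuclideanSpace ℝ (Fin n) → ℝ} (hw : ContDiff ℝ 2 w)
    (x : EuclideanSpace ℝ (Fin n)) (i j : Fin n) :
    shess n w x i j =
      fderiv ℝ (fderiv ℝ w) x (EuclideanSpace.single i 1) (EuclideanSpace.single j 1) := by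
  have hdfw : Differentiable ℝ (fderiv ℝ w) :=
    (hw.fderiv_right (m := 1) (le_refl _)).differentiable one_ne_zero
  show fderiv ℝ (fun y => fderiv ℝ w y (EuclideanSpace.single j 1)) x _ = _
  rw [fderiv_clm_apply (hdfw x) (differentiableAt_const _)]
  simp

lemma quadform_nonpos {n : ℕ} {w : EuclideanSpace ℝ (Fin n) → ℝ} (hw : ContDiff ℝ 2 w)
    {y₀ : EuclideanSpace ℝ (Fin n)} (hmax : ∀ y, w y ≤ w y₀) (u : Fin n → ℝ) :
    ∑ i, ∑ j, u i * shess n w y₀ i j * u j ≤ 0 := by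
  have hdw : Differentiable ℝ w := hw.differentiable two_ne_zero
  have hdfw : Differentiable ℝ (fderiv ℝ w) :=
    (hw.fderiv_right (m := 1) (le_refl _)).differentiable one_ne_zero
  set U : EuclideanSpace ℝ (Fin n) := (EuclideanSpace.equiv (Fin n) ℝ).symm u with hU
  set g : ℝ → ℝ := fun t => w (y₀ + t • U) with hg
  have hφ : ∀ t : ℝ, HasDerivAt (fun s : ℝ => y₀ + s • U) U t := fun t => by
    simpa using ((hasDerivAt_id t).smul_const U).const_add y₀
  have hg1 : ∀ t, deriv g t = fderiv ℝ w (y₀ + t • U) U := fun t =>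
    ((hdw _).hasFDerivAt.comp_hasDerivAt t (hφ t)).deriv
  have h2 : HasFDerivAt (fun y => fderiv ℝ w y U)
      ((fderiv ℝ w y₀).comp (0 : _ →L[ℝ] _) + (fderiv ℝ (fderiv ℝ w) y₀).flip U) y₀ :=
    (hdfw y₀).hasFDerivAt.clm_apply (hasFDerivAt_const U y₀)
  have h3 : HasDerivAt (fun t : ℝ => fderiv ℝ w (y₀ + t • U) U)
      (fderiv ℝ (fderiv ℝ w) y₀ U U) 0 := by
    have h0 : y₀ = y₀ + (0:ℝ) • U := by simp
    rw [h0] at h2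
    have := h2.comp_hasDerivAt 0 (hφ 0)
    simpa [Function.comp_def] using this
  have hkey : deriv (deriv g) 0 = fderiv ℝ (fderiv ℝ w) y₀ U U := by
    have : deriv g = fun t => fderiv ℝ w (y₀ + t • U) U := funext hg1
    rw [this]
    exact h3.deriv
  have hgC2 : ContDiff ℝ 2 g := by
    apply hw.comp
    exact contDiff_const.add (contDiff_id.smul contDiff_const)
  have hgmax : ∀ t, g t ≤ g 0 := fun t => by
    simpa [hg] using hmax (y₀ + t • U)
  have hle : fderiv ℝ (fderiv ℝ w) y₀ U U ≤ 0 := by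
    rw [← hkey]; exact deriv2_nonpos_of_max hgC2 hgmax
  have hUsum : U = ∑ i, u i • EuclideanSpace.single i 1 := by
    have := (EuclideanSpace.basisFun (Fin n) ℝ).sum_repr U
    simp only [EuclideanSpace.basisFun_repr, EuclideanSpace.basisFun_apply] at this
    rw [← this]
    rfl
  calc ∑ i, ∑ j, u i * shess n w y₀ i j * u j
      = fderiv ℝ (fderiv ℝ w) y₀ U U := by
        rw [hUsum, map_sum, Finset.sum_comm]
        simp only [map_smul, ContinuousLinearMap.sum_apply, ContinuousLinearMap.smul_apply,
          map_sum, map_smul, smul_eq_mul, Finset.mul_sum]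
        refine Finset.sum_congr rfl fun i _ => Finset.sum_congr rfl fun j _ => ?_
        rw [shess_eq hw]
        ring
    _ ≤ 0 := hle


lemma trace_nonpos {n : ℕ} (M H : Matrix (Fin n) (Fin n) ℝ) (hM : ∀ i j, M i j = M j i)
    (hH : ∀ u : Fin n → ℝ, ∑ i, ∑ j, u i * H i j * u j ≤ 0) :
    Matrix.trace (M * M * H) ≤ 0 := by
  rw [← Matrix.trace_mul_cycle]
  unfold Matrix.trace
  apply Finset.sum_nonpos
  intro i _
  have : (M * H * M).diag i = ∑ l, ∑ k, M i l * H l k * M i k := by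
    simp only [Matrix.diag_apply, Matrix.mul_apply, Finset.sum_mul]
    rw [Finset.sum_comm]
    refine Finset.sum_congr rfl fun l _ => Finset.sum_congr rfl fun k _ => ?_
    rw [hM k i]
  rw [this]
  exact hH (fun j => M i j)

lemma amat_sq {n : ℕ} (q : EuclideanSpace ℝ (Fin n)) :
    ∃ M : Matrix (Fin n) (Fin n) ℝ, (∀ i j, M i j = M j i) ∧ M * M = amat n q := by
  set t : ℝ := ∑ i, q i ^ 2 with ht
  have htn : 0 ≤ t := Finset.sum_nonneg fun i _ => sq_nonneg _
  have hnorm : ‖q‖ ^ 2 = t := by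
    rw [EuclideanSpace.norm_eq, Real.sq_sqrt (Finset.sum_nonneg fun i _ => sq_nonneg _)]
    simp [Real.norm_eq_abs, sq_abs]
    exact ht.symm
  by_cases ht0 : t = 0
  · refine ⟨1, fun i j => by simp [Matrix.one_apply, eq_comm], ?_⟩
    have hq : ∀ i, q i = 0 := by
      intro i
      have := (Finset.sum_eq_zero_iff_of_nonneg (fun i _ => sq_nonneg (q i))).mp ht0 i
        (Finset.mem_univ i)
      exact pow_eq_zero_iff (by norm_num) |>.mp this
    ext i j
    simp [amat, Matrix.one_apply, hq i]
  · have htp : 0 < t := lt_of_le_of_ne htn (Ne.symm ht0)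
    set s : ℝ := 1 + t with hs
    have hsp : 0 < s := by positivity
    set r : ℝ := Real.sqrt s⁻¹ with hr
    have hr2 : r ^ 2 = s⁻¹ := Real.sq_sqrt (by positivity)
    set α : ℝ := (1 - r) / t with hα
    have hkey : 2 * α - α ^ 2 * t = 1 / s := by
      have h1 : α * t = 1 - r := by rw [hα]; field_simp
      have h2 : (2 * α - α ^ 2 * t) * t = 1 - r ^ 2 := by
        have e : (2 * α - α ^ 2 * t) * t = 2 * (α * t) - (α * t) ^ 2 := by ring
        rw [e, h1]; ring
      have h3 : (1 : ℝ) - r ^ 2 = t / s := by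
        rw [hr2, hs]; field_simp; ring
      have h4 := h2.trans h3
      have h5 : 2 * α - α ^ 2 * t = (t / s) / t := by
        rw [eq_div_iff ht0]; exact h4
      rw [h5]; field_simp
    refine ⟨fun i j => (if i = j then 1 else 0) - α * (q i * q j), fun i j => by
      simp only [eq_comm (a := i) (b := j)]; ring_nf, ?_⟩
    ext i j
    change ∑ k, ((if i = k then (1:ℝ) else 0) - α * (q i * q k)) *
      ((if k = j then (1:ℝ) else 0) - α * (q k * q j)) = _
    have expand : ∀ k : Fin n,
        ((if i = k then (1:ℝ) else 0) - α * (q i * q k)) *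
          ((if k = j then (1:ℝ) else 0) - α * (q k * q j)) =
        (if i = k then (1:ℝ) else 0) * (if k = j then (1:ℝ) else 0)
          - (if i = k then (1:ℝ) else 0) * (α * (q k * q j))
          - α * (q i * q k) * (if k = j then (1:ℝ) else 0)
          + α ^ 2 * (q i * q j) * q k ^ 2 := by
      intro k; ring
    rw [Finset.sum_congr rfl (fun k _ => expand k)]
    have e1 : ∑ k, ((if i = k then (1:ℝ) else 0) * (if k = j then (1:ℝ) else 0)
          - (if i = k then (1:ℝ) else 0) * (α * (q k * q j))
          - α * (q i * q k) * (if k = j then (1:ℝ) else 0)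
          + α ^ 2 * (q i * q j) * q k ^ 2)
        = (if i = j then (1:ℝ) else 0) - α * (q i * q j) - α * (q i * q j)
          + α ^ 2 * (q i * q j) * t := by
      rw [Finset.sum_add_distrib, Finset.sum_sub_distrib, Finset.sum_sub_distrib, ← Finset.mul_sum,
        ← ht]
      congr 1
      congr 1
      congr 1
      · simp [Finset.sum_ite_eq]
      · simp [Finset.sum_ite_eq, mul_ite, ite_mul]
      · simp [Finset.sum_ite_eq', mul_ite, ite_mul]
    rw [e1]
    show _ = (if i = j then (1:ℝ) else 0) - q i * q j / (1 + ‖q‖ ^ 2)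
    rw [hnorm, ← hs]
    linear_combination (-(q i * q j)) * hkey

lemma key_le {n : ℕ} (c : EuclideanSpace ℝ (Fin n) → ℝ) (p : EuclideanSpace ℝ (Fin n))
    (v₁ v₂ : EuclideanSpace ℝ (Fin n) → ℝ)
    (hv₁ : ContDiff ℝ 2 v₁) (hv₂ : ContDiff ℝ 2 v₂)
    (hp₁ : ZPeriodic n v₁) (hp₂ : ZPeriodic n v₂) (μ₁ μ₂ : ℝ)
    (he₁ : ∀ y, Fop n c (shess n v₁ y) (p + sgrad n v₁ y) y = μ₁)
    (he₂ : ∀ y, Fop n c (shess n v₂ y) (p + sgrad n v₂ y) y = μ₂) :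
    μ₂ ≤ μ₁ := by
  have hw : ContDiff ℝ 2 (fun y => v₁ y - v₂ y) := hv₁.sub hv₂
  have hwper : ZPeriodic n (fun y => v₁ y - v₂ y) := fun y k => by
    simp only [hp₁ y k, hp₂ y k]
  obtain ⟨y₀, hy₀⟩ := exists_global_max hw.continuous hwper
  have hld : fderiv ℝ (fun y => v₁ y - v₂ y) y₀ = 0 :=
    IsLocalMax.fderiv_eq_zero (Filter.Eventually.of_forall hy₀)
  have hd1 : Differentiable ℝ v₁ := hv₁.differentiable two_ne_zero
  have hd2 : Differentiable ℝ v₂ := hv₂.differentiable two_ne_zero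
  have hgr : fderiv ℝ v₁ y₀ = fderiv ℝ v₂ y₀ := by
    have h := fderiv_fun_sub (hd1 y₀) (hd2 y₀)
    rw [hld] at h
    exact sub_eq_zero.mp h.symm
  have hsg : sgrad n v₁ y₀ = sgrad n v₂ y₀ := by
    unfold sgrad; rw [hgr]
  set q : EuclideanSpace ℝ (Fin n) := p + sgrad n v₁ y₀ with hq
  have hdf1 : ∀ j, Differentiable ℝ (fun y => fderiv ℝ v₁ y (EuclideanSpace.single j 1)) :=
    fun j => ((hv₁.fderiv_right (m := 1) (le_refl _)).differentiable one_ne_zero).clm_apply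
      (differentiable_const _)
  have hdf2 : ∀ j, Differentiable ℝ (fun y => fderiv ℝ v₂ y (EuclideanSpace.single j 1)) :=
    fun j => ((hv₂.fderiv_right (m := 1) (le_refl _)).differentiable one_ne_zero).clm_apply
      (differentiable_const _)
  have hsh : ∀ i j, shess n (fun y => v₁ y - v₂ y) y₀ i j
      = shess n v₁ y₀ i j - shess n v₂ y₀ i j := by
    intro i j
    show fderiv ℝ (fun y => fderiv ℝ (fun z => v₁ z - v₂ z) y (EuclideanSpace.single j 1)) y₀
        (EuclideanSpace.single i 1) = _
    have hfun : (fun y => fderiv ℝ (fun z => v₁ z - v₂ z) y (EuclideanSpace.single j 1))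
        = fun y => fderiv ℝ v₁ y (EuclideanSpace.single j 1)
            - fderiv ℝ v₂ y (EuclideanSpace.single j 1) := by
      funext y
      rw [fderiv_fun_sub (hd1 y) (hd2 y)]
      simp
    rw [hfun, fderiv_fun_sub (hdf1 j y₀) (hdf2 j y₀)]
    simp [shess]
  have hquad := quadform_nonpos hw hy₀
  obtain ⟨M, hMsym, hMsq⟩ := amat_sq q
  have htr : Matrix.trace (amat n q * (shess n v₁ y₀ - shess n v₂ y₀)) ≤ 0 := by
    rw [← hMsq]
    apply trace_nonpos M _ hMsym
    intro u
    refine le_trans (le_of_eq ?_) (hquad u)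
    refine Finset.sum_congr rfl fun i _ => Finset.sum_congr rfl fun j _ => ?_
    rw [hsh i j]
    rfl
  have e1 := he₁ y₀
  have e2 := he₂ y₀
  rw [← hsg, ← hq] at e2
  rw [← hq] at e1
  unfold Fop at e1 e2
  have hsub : Matrix.trace (amat n q * shess n v₁ y₀) - Matrix.trace (amat n q * shess n v₂ y₀)
      = Matrix.trace (amat n q * (shess n v₁ y₀ - shess n v₂ y₀)) := by
    rw [Matrix.mul_sub, Matrix.trace_sub]
  linarith

theorem stmt_8 (n : ℕ) (c : EuclideanSpace ℝ (Fin n) → ℝ)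
    (hc : Continuous c) (hper : ZPeriodic n c) (p : EuclideanSpace ℝ (Fin n))
    (v₁ v₂ : EuclideanSpace ℝ (Fin n) → ℝ)
    (hv₁ : ContDiff ℝ 2 v₁) (hv₂ : ContDiff ℝ 2 v₂)
    (hp₁ : ZPeriodic n v₁) (hp₂ : ZPeriodic n v₂) (μ₁ μ₂ : ℝ)
    (he₁ : ∀ y, Fop n c (shess n v₁ y) (p + sgrad n v₁ y) y = μ₁)
    (he₂ : ∀ y, Fop n c (shess n v₂ y) (p + sgrad n v₂ y) y = μ₂) :
    μ₁ = μ₂ :=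
  le_antisymm (key_le c p v₂ v₁ hv₂ hv₁ hp₂ hp₁ μ₂ μ₁ he₂ he₁)
    (key_le c p v₁ v₂ hv₁ hv₂ hp₁ hp₂ μ₁ μ₂ he₁ he₂)
end
end

section
/- (Bounds on the effective constant.) Let c : ℝⁿ → ℝ be continuous and ℤⁿ-periodic, and let F(X,p,y) := −tr{(I_n − (p⊗p)/(1+|p|²))X} − c(y)√(1+|p|²). Fix p ∈ ℝⁿ. Suppose v ∈ C²(ℝⁿ) is ℤⁿ-periodic and μ ∈ ℝ satisfies F(D²v, p+Dv, y) = μ for all y ∈ ℝⁿ. Then −(max_{ℝⁿ} c)·√(1+|p|²) ≤ μ ≤ −(min_{ℝⁿ} c)·√(1+|p|²). -/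
open Set

noncomputable section

/- ======================= auxiliary lemmas ======================= -/

lemma secderiv_le_zero (g : ℝ → ℝ) (hg : ContDiff ℝ 2 g) (hmax : IsLocalMax g 0) :
    deriv (deriv g) 0 ≤ 0 := by
  by_contra h
  push_neg at h
  have hgd : Differentiable ℝ g := hg.differentiable (by norm_num)
  have hg' : ContDiff ℝ 1 (deriv g) :=
    (contDiff_succ_iff_deriv.mp (show ContDiff ℝ (1+1 : ℕ) g by exact_mod_cast hg)).2.2
  have hg'd : DifferentiableAt ℝ (deriv g) 0 := (hg'.differentiable one_ne_zero) 0
  have hd0 : deriv g 0 = 0 := hmax.deriv_eq_zero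
  have hslope : Filter.Tendsto (fun t => deriv g t / t) (nhdsWithin 0 {(0:ℝ)}ᶜ)
      (nhds (deriv (deriv g) 0)) := by
    have := hg'd.hasDerivAt
    rw [hasDerivAt_iff_tendsto_slope] at this
    simpa [slope_fun_def_field, hd0] using this
  have hev : ∀ᶠ t in nhdsWithin 0 {(0:ℝ)}ᶜ, 0 < deriv g t / t :=
    hslope.eventually (eventually_gt_nhds h)
  rw [eventually_nhdsWithin_iff] at hev
  rcases Metric.eventually_nhds_iff.mp hev with ⟨δ, hδ, hball⟩
  have hpos : ∀ t ∈ Set.Ioo (0:ℝ) δ, 0 < deriv g t := by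
    intro t ht
    have h1 : dist t 0 < δ := by rw [Real.dist_eq, sub_zero, abs_of_pos ht.1]; exact ht.2
    have h2 := hball h1 (by simp [ne_of_gt ht.1])
    rcases div_pos_iff.mp h2 with ⟨hh, _⟩ | ⟨_, hh⟩
    · exact hh
    · exact absurd hh (not_lt.mpr ht.1.le)
  have hmono : StrictMonoOn g (Set.Icc 0 (δ/2)) := by
    apply strictMonoOn_of_deriv_pos (convex_Icc _ _) hgd.continuous.continuousOn
    intro t ht
    rw [interior_Icc] at ht
    exact hpos t ⟨ht.1, ht.2.trans (by linarith)⟩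
  rcases Metric.eventually_nhds_iff.mp hmax with ⟨ε, hε, hball2⟩
  set t := min (δ/2) (ε/2) with ht
  have htpos : 0 < t := by positivity
  have h1 : g 0 < g t := hmono ⟨le_rfl, by positivity⟩ ⟨htpos.le, min_le_left _ _⟩ htpos
  have h2 : g t ≤ g 0 := hball2 (by
    rw [Real.dist_eq, sub_zero, abs_of_pos htpos]
    exact lt_of_le_of_lt (min_le_right _ _) (by linarith))
  linarith

lemma euclid_decomp {n : ℕ} (w : Fin n → ℝ) :
    (EuclideanSpace.equiv (Fin n) ℝ).symm w = ∑ i, w i • EuclideanSpace.single i (1:ℝ) := by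
  ext j
  have : (∑ i, w i • EuclideanSpace.single i (1:ℝ)) j
      = EuclideanSpace.proj (𝕜 := ℝ) j (∑ i, w i • EuclideanSpace.single i (1:ℝ)) := rfl
  rw [this, map_sum]
  simp [EuclideanSpace.single_apply]

lemma deriv2_line {n : ℕ} (v : EuclideanSpace ℝ (Fin n) → ℝ) (hv : ContDiff ℝ 2 v)
    (y₀ : EuclideanSpace ℝ (Fin n)) (w : Fin n → ℝ) :
    deriv (deriv (fun t : ℝ => v (y₀ + t • ((EuclideanSpace.equiv (Fin n) ℝ).symm w)))) 0
      = ∑ j, ∑ k, w j * w k * shess n v y₀ j k := by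
  set w' : EuclideanSpace ℝ (Fin n) := (EuclideanSpace.equiv (Fin n) ℝ).symm w with hw'
  have hL : ∀ t : ℝ, HasDerivAt (fun t : ℝ => y₀ + t • w') w' t := by
    intro t
    simpa using ((hasDerivAt_id t).smul_const w').const_add y₀
  have hvdiff : Differentiable ℝ v := hv.differentiable (by norm_num)
  have hd1 : deriv (fun t : ℝ => v (y₀ + t • w')) = fun t => fderiv ℝ v (y₀ + t • w') w' := by
    funext t
    exact ((hvdiff (y₀ + t • w')).hasFDerivAt.comp_hasDerivAt t (hL t)).deriv
  rw [hd1]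
  have hD2 : DifferentiableAt ℝ (fderiv ℝ v) y₀ := by
    have h1 : ContDiff ℝ 1 (fderiv ℝ v) := hv.fderiv_right (by norm_num)
    exact (h1.differentiable one_ne_zero) y₀
  set D2 := fderiv ℝ (fderiv ℝ v) y₀ with hD2def
  have hchain : HasDerivAt (fun t : ℝ => fderiv ℝ v (y₀ + t • w') w') ((D2 w') w') 0 := by
    have h1 : HasDerivAt (fun t : ℝ => fderiv ℝ v (y₀ + t • w')) (D2 w') 0 := by
      have h0 : HasFDerivAt (fderiv ℝ v) D2 ((fun t : ℝ => y₀ + t • w') 0) := by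
        simpa using hD2.hasFDerivAt
      exact h0.comp_hasDerivAt 0 (hL 0)
    have h2 := (ContinuousLinearMap.apply ℝ ℝ w').hasFDerivAt.comp_hasDerivAt 0 h1
    exact h2
  rw [hchain.deriv]
  have hsh : ∀ j k, shess n v y₀ j k
      = (D2 (EuclideanSpace.single j 1)) (EuclideanSpace.single k 1) := by
    intro j k
    have hc := ((ContinuousLinearMap.apply ℝ ℝ
        (EuclideanSpace.single k (1:ℝ))).hasFDerivAt.comp y₀ hD2.hasFDerivAt).fderiv
    simp only [shess]
    rw [show (fun y => fderiv ℝ v y (EuclideanSpace.single k (1:ℝ)))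
      = (ContinuousLinearMap.apply ℝ ℝ (EuclideanSpace.single k (1:ℝ))) ∘ (fderiv ℝ v) from rfl,
      hc]
    rfl
  have key : ∀ z : EuclideanSpace ℝ (Fin n),
      (D2 w') z = ∑ j, w j * (D2 (EuclideanSpace.single j 1)) z := by
    intro z
    rw [hw', euclid_decomp w, map_sum, ContinuousLinearMap.sum_apply]
    refine Finset.sum_congr rfl fun j _ => ?_
    rw [map_smul, ContinuousLinearMap.smul_apply, smul_eq_mul]
  rw [key w']
  refine Finset.sum_congr rfl fun j _ => ?_
  have key2 : (D2 (EuclideanSpace.single j 1)) w'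
      = ∑ k, w k * (D2 (EuclideanSpace.single j 1)) (EuclideanSpace.single k 1) := by
    rw [hw', euclid_decomp w, map_sum]
    refine Finset.sum_congr rfl fun k _ => ?_
    rw [map_smul, smul_eq_mul]
  rw [key2, Finset.mul_sum]
  refine Finset.sum_congr rfl fun k _ => ?_
  rw [hsh]
  ring

lemma trace_amat_nonpos {n : ℕ} (q : EuclideanSpace ℝ (Fin n)) (X : Matrix (Fin n) (Fin n) ℝ)
    (hX : ∀ w : Fin n → ℝ, ∑ j, ∑ k, w j * w k * X j k ≤ 0) :
    Matrix.trace (amat n q * X) ≤ 0 := by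
  classical
  set u : ℝ := ∑ i, q i ^ 2 with hu_def
  have hu : 0 ≤ u := Finset.sum_nonneg fun i _ => sq_nonneg _
  have hnorm : ‖q‖ ^ 2 = u := by
    rw [EuclideanSpace.norm_eq, Real.sq_sqrt (by positivity)]
    simp [hu_def, sq_abs]
  set s : ℝ := 1 + u with hs_def
  have hs : 0 < s := by positivity
  set r : ℝ := Real.sqrt s with hr_def
  have hr : 0 < r := Real.sqrt_pos.mpr hs
  have hr2 : r ^ 2 = s := Real.sq_sqrt hs.le
  set t : ℝ := if u = 0 then 0 else (1 - 1/r)/u with ht_def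
  set b : Matrix (Fin n) (Fin n) ℝ :=
    fun i j => (if i = j then (1:ℝ) else 0) - t * (q i * q j) with hb_def
  have hbsym : ∀ i j, b i j = b j i := by
    intro i j
    by_cases h : i = j
    · subst h; rfl
    · simp only [hb_def, if_neg h, if_neg (Ne.symm h)]; ring
  have hqb : ∀ j, ∑ k, q k * b k j = (1 - t * u) * q j := by
    intro j
    have hterm : ∀ k, q k * b k j = (if k = j then q k else 0) - t * (q k ^ 2 * q j) := by
      intro k; simp only [hb_def]; by_cases h : k = j <;> simp [h] <;> ring
    rw [Finset.sum_congr rfl fun k _ => hterm k, Finset.sum_sub_distrib,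
      Finset.sum_ite_eq' Finset.univ j q, ← Finset.mul_sum, ← Finset.sum_mul, ← hu_def]
    simp only [Finset.mem_univ, if_true]
    ring
  have hbb : amat n q = b * b := by
    ext i j
    rw [Matrix.mul_apply]
    have step : ∀ k, b i k * b k j = (if i = k then b k j else 0) - t * q i * (q k * b k j) := by
      intro k
      by_cases h : i = k
      · subst h; simp only [hb_def]; simp; ring
      · simp only [hb_def, if_neg h]; simp [h]; ring
    rw [Finset.sum_congr rfl fun k _ => step k, Finset.sum_sub_distrib]
    rw [Finset.sum_ite_eq Finset.univ i (fun k => b k j)]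
    simp only [Finset.mem_univ, if_true]
    rw [show (∑ k, t * q i * (q k * b k j)) = t * q i * ((1 - t*u) * q j) by
      rw [← Finset.mul_sum, hqb j]]
    have hamat : amat n q i j = (if i = j then (1:ℝ) else 0) - (2*t - t^2*u) * (q i * q j) := by
      by_cases hu0 : u = 0
      · have hq : ∀ m, q m = 0 := by
          intro m
          have h0 : (∑ i, q i ^ 2) = 0 := by rw [← hu_def, hu0]
          have := (Finset.sum_eq_zero_iff_of_nonneg (fun i _ => sq_nonneg (q i))).mp h0
          exact pow_eq_zero_iff two_ne_zero |>.mp (this m (Finset.mem_univ m))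
        simp [amat, hq]
      · have hcoef : 2 * t - t ^ 2 * u = 1 / s := by
          have ht : t = (1 - 1/r)/u := by rw [ht_def, if_neg hu0]
          have hru : r ^ 2 = 1 + u := by rw [hr2, hs_def]
          have h1u : (1:ℝ) + u ≠ 0 := by positivity
          rw [ht, hs_def]
          field_simp
          linear_combination hru
        rw [hcoef]
        simp only [amat, hnorm, hs_def]
        ring
    rw [hamat, hb_def]
    ring
  rw [hbb, Matrix.mul_assoc, Matrix.trace_mul_comm]
  rw [Matrix.trace]
  apply Finset.sum_nonpos
  intro i _
  have key : Matrix.diag (b * X * b) i = ∑ j, ∑ k, b i j * b i k * X j k := by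
    simp only [Matrix.diag_apply, Matrix.mul_apply]
    rw [Finset.sum_congr rfl fun j (_ : j ∈ Finset.univ) =>
      Finset.sum_mul Finset.univ (fun k => b i k * X k j) (b j i)]
    rw [Finset.sum_comm]
    refine Finset.sum_congr rfl fun k _ => Finset.sum_congr rfl fun j _ => ?_
    rw [hbsym j i]
    ring
  rw [key]
  have := hX (fun m => b i m)
  simpa using this

/-- The fundamental cube. -/
def Kcube (n : ℕ) : Set (EuclideanSpace ℝ (Fin n)) :=
  (EuclideanSpace.equiv (Fin n) ℝ).symm '' (Set.univ.pi fun _ => Set.Icc (0:ℝ) 1)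

lemma Kcube_compact (n : ℕ) : IsCompact (Kcube n) :=
  (isCompact_univ_pi fun _ => isCompact_Icc).image
    (EuclideanSpace.equiv (Fin n) ℝ).symm.continuous

lemma Kcube_decomp {n : ℕ} (y : EuclideanSpace ℝ (Fin n)) :
    ∃ y' ∈ Kcube n, ∀ f : EuclideanSpace ℝ (Fin n) → ℝ, ZPeriodic n f → f y = f y' := by
  refine ⟨(EuclideanSpace.equiv (Fin n) ℝ).symm (fun i => Int.fract (y i)),
    ⟨fun i => Int.fract (y i), fun i _ => ⟨Int.fract_nonneg _, (Int.fract_lt_one _).le⟩, rfl⟩, ?_⟩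
  intro f hf
  have hkey : y = ((EuclideanSpace.equiv (Fin n) ℝ).symm (fun i => Int.fract (y i)))
      + (EuclideanSpace.equiv (Fin n) ℝ).symm (fun i => ((⌊y i⌋ : ℤ) : ℝ)) := by
    apply (EuclideanSpace.equiv (Fin n) ℝ).injective
    funext i
    have : Int.fract (y i) + (⌊y i⌋ : ℝ) = y i := Int.fract_add_floor (y i)
    simp only [map_add]
    exact this.symm
  conv_lhs => rw [hkey]
  exact hf _ (fun i => ⌊y i⌋)

lemma range_eq_image_Kcube {n : ℕ} (f : EuclideanSpace ℝ (Fin n) → ℝ) (hf : ZPeriodic n f) :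
    Set.range f = f '' Kcube n := by
  apply subset_antisymm
  · rintro x ⟨y, rfl⟩
    obtain ⟨y', hy', heq⟩ := Kcube_decomp y
    exact ⟨y', hy', (heq f hf).symm⟩
  · rintro x ⟨y, _, rfl⟩
    exact mem_range_self y

lemma Kcube_nonempty (n : ℕ) : (Kcube n).Nonempty := by
  obtain ⟨y', hy', _⟩ := Kcube_decomp (0 : EuclideanSpace ℝ (Fin n))
  exact ⟨y', hy'⟩

/- ======================= main theorem ======================= -/

theorem stmt_9 (n : ℕ) (c : EuclideanSpace ℝ (Fin n) → ℝ)
    (hc : Continuous c) (hper : ZPeriodic n c) (p : EuclideanSpace ℝ (Fin n))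
    (v : EuclideanSpace ℝ (Fin n) → ℝ) (hv : ContDiff ℝ 2 v) (hvper : ZPeriodic n v)
    (μ : ℝ) (he : ∀ y, Fop n c (shess n v y) (p + sgrad n v y) y = μ) :
    -(sSup (Set.range c)) * Real.sqrt (1 + ‖p‖ ^ 2) ≤ μ ∧
      μ ≤ -(sInf (Set.range c)) * Real.sqrt (1 + ‖p‖ ^ 2) := by
  have hKc := Kcube_compact n
  have hKne := Kcube_nonempty n
  have hcbdd : BddAbove (Set.range c) := by
    rw [range_eq_image_Kcube c hper]
    exact (hKc.image hc).bddAbove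
  have hcbddb : BddBelow (Set.range c) := by
    rw [range_eq_image_Kcube c hper]
    exact (hKc.image hc).bddBelow
  have hsq : (0:ℝ) ≤ Real.sqrt (1 + ‖p‖ ^ 2) := Real.sqrt_nonneg _
  have hvcont : Continuous v := hv.continuous
  -- helper: ContDiff of the line restriction
  have hline : ∀ (y₀ : EuclideanSpace ℝ (Fin n)) (w' : EuclideanSpace ℝ (Fin n)),
      ContDiff ℝ 2 (fun t : ℝ => v (y₀ + t • w')) :=
    fun y₀ w' => hv.comp (contDiff_const.add (contDiff_id.smul contDiff_const))
  constructor
  · -- lower bound, via maximum of v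
    obtain ⟨y₀, hy₀K, hy₀max⟩ := hKc.exists_isMaxOn hKne hvcont.continuousOn
    have hglob : ∀ y, v y ≤ v y₀ := by
      intro y
      obtain ⟨y', hy', heq⟩ := Kcube_decomp y
      rw [heq v hvper]
      exact hy₀max hy'
    have hlocmax : IsLocalMax v y₀ := Filter.Eventually.of_forall hglob
    have hfz : fderiv ℝ v y₀ = 0 := hlocmax.fderiv_eq_zero
    have hgrad : sgrad n v y₀ = 0 := by
      ext i
      simp [sgrad, hfz]
    have hX : ∀ w : Fin n → ℝ, ∑ j, ∑ k, w j * w k * shess n v y₀ j k ≤ 0 := by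
      intro w
      rw [← deriv2_line v hv y₀ w]
      apply secderiv_le_zero _ (hline y₀ _)
      exact Filter.Eventually.of_forall fun t => by simpa using hglob _
    have htr := trace_amat_nonpos p (shess n v y₀) hX
    have hμ := he y₀
    rw [hgrad, add_zero] at hμ
    simp only [Fop] at hμ
    have hcy : c y₀ ≤ sSup (Set.range c) := le_csSup hcbdd (mem_range_self y₀)
    have h1 : -(sSup (Set.range c)) * Real.sqrt (1 + ‖p‖ ^ 2)
        ≤ -(c y₀) * Real.sqrt (1 + ‖p‖ ^ 2) :=
      mul_le_mul_of_nonneg_right (neg_le_neg hcy) hsq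
    calc -(sSup (Set.range c)) * Real.sqrt (1 + ‖p‖ ^ 2)
        ≤ -(c y₀) * Real.sqrt (1 + ‖p‖ ^ 2) := h1
      _ ≤ μ := by rw [← hμ]; nlinarith [htr]
  · -- upper bound, via minimum of v
    obtain ⟨y₁, hy₁K, hy₁min⟩ := hKc.exists_isMinOn hKne hvcont.continuousOn
    have hglob : ∀ y, v y₁ ≤ v y := by
      intro y
      obtain ⟨y', hy', heq⟩ := Kcube_decomp y
      rw [heq v hvper]
      exact hy₁min hy'
    have hlocmin : IsLocalMin v y₁ := Filter.Eventually.of_forall hglob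
    have hfz : fderiv ℝ v y₁ = 0 := hlocmin.fderiv_eq_zero
    have hgrad : sgrad n v y₁ = 0 := by
      ext i
      simp [sgrad, hfz]
    have hX : ∀ w : Fin n → ℝ, 0 ≤ ∑ j, ∑ k, w j * w k * shess n v y₁ j k := by
      intro w
      rw [← deriv2_line v hv y₁ w]
      set w' := (EuclideanSpace.equiv (Fin n) ℝ).symm w
      have hneg : deriv (deriv (fun t : ℝ => -(v (y₁ + t • w')))) 0
          = - deriv (deriv (fun t : ℝ => v (y₁ + t • w'))) 0 := by
        have h1 : (deriv fun t : ℝ => -(v (y₁ + t • w')))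
            = fun t => -(deriv (fun s : ℝ => v (y₁ + s • w')) t) := funext fun t => deriv.neg
        rw [h1, deriv.fun_neg]
      have h2 : deriv (deriv (fun t : ℝ => -(v (y₁ + t • w')))) 0 ≤ 0 := by
        apply secderiv_le_zero _ ((hline y₁ w').neg)
        exact Filter.Eventually.of_forall fun t => by simpa using hglob _
      rw [hneg] at h2
      linarith
    have hX' : ∀ w : Fin n → ℝ, ∑ j, ∑ k, w j * w k * (-(shess n v y₁)) j k ≤ 0 := by
      intro w
      have : ∑ j, ∑ k, w j * w k * (-(shess n v y₁)) j k
          = -∑ j, ∑ k, w j * w k * shess n v y₁ j k := by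
        rw [← Finset.sum_neg_distrib]
        refine Finset.sum_congr rfl fun j _ => ?_
        rw [← Finset.sum_neg_distrib]
        refine Finset.sum_congr rfl fun k _ => ?_
        simp [Matrix.neg_apply]
      rw [this]
      linarith [hX w]
    have htr := trace_amat_nonpos p (-(shess n v y₁)) hX'
    rw [Matrix.mul_neg, Matrix.trace_neg] at htr
    have htr' : 0 ≤ Matrix.trace (amat n p * shess n v y₁) := by linarith
    have hμ := he y₁
    rw [hgrad, add_zero] at hμ
    simp only [Fop] at hμ
    have hcy : sInf (Set.range c) ≤ c y₁ := csInf_le hcbddb (mem_range_self y₁)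
    have h1 : -(c y₁) * Real.sqrt (1 + ‖p‖ ^ 2)
        ≤ -(sInf (Set.range c)) * Real.sqrt (1 + ‖p‖ ^ 2) :=
      mul_le_mul_of_nonneg_right (neg_le_neg hcy) hsq
    calc μ ≤ -(c y₁) * Real.sqrt (1 + ‖p‖ ^ 2) := by rw [← hμ]; nlinarith [htr']
      _ ≤ -(sInf (Set.range c)) * Real.sqrt (1 + ‖p‖ ^ 2) := h1
end
end

section
/- (Self-similarity at the origin.) Let w̄ : ℝⁿ×[0,∞) → ℝ be continuous, globally Lipschitz in x uniformly in t, C² in x and C¹ in t on ℝⁿ×(0,∞), satisfying w̄_t = tr{a(Dw̄)D²w̄} pointwise on ℝⁿ×(0,∞) and w̄(x,0) = |x|. Suppose that any two such solutions with initial data |x| coincide. Then w̄(λx, λ²t) = λ w̄(x,t) for all λ > 0, x ∈ ℝⁿ, t ≥ 0; in particular, w̄(0,t) = √t · w̄(0,1) for all t ≥ 0. -/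
open Set

noncomputable section

/-- The (unforced) graphical MCF right-hand side `tr{a(Dw)D²w}` at `(x,t)`. -/
def mcfPure (n : ℕ) (w : EuclideanSpace ℝ (Fin n) → ℝ → ℝ)
    (x : EuclideanSpace ℝ (Fin n)) (t : ℝ) : ℝ :=
  Matrix.trace (amat n (sgrad n (fun y => w y t) x) * shess n (fun y => w y t) x)

/-- `w` is a classical solution of `w_t = tr{a(Dw)D²w}` on `ℝⁿ×(0,∞)` with initial data `w₀`. -/
def IsMCFSol (n : ℕ) (w₀ : EuclideanSpace ℝ (Fin n) → ℝ)
    (w : EuclideanSpace ℝ (Fin n) → ℝ → ℝ) : Prop :=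
  ContinuousOn (fun q : EuclideanSpace ℝ (Fin n) × ℝ => w q.1 q.2) (univ ×ˢ Ici 0) ∧
  (∀ t ∈ Ioi (0:ℝ), ContDiff ℝ 2 (fun x => w x t)) ∧
  (∀ x, ContDiffOn ℝ 1 (w x) (Ioi 0)) ∧
  (∀ x, ∀ t ∈ Ioi (0:ℝ), deriv (w x) t = mcfPure n w x t) ∧
  (∀ x, w x 0 = w₀ x)

/-- `w` is globally Lipschitz in `x`, uniformly in `t ≥ 0`. -/
def GlobLipX (n : ℕ) (w : EuclideanSpace ℝ (Fin n) → ℝ → ℝ) : Prop :=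
  ∃ L : NNReal, ∀ t ∈ Ici (0:ℝ), LipschitzWith L (fun x => w x t)

section AuxScaling

variable {n : ℕ}

lemma fderiv_comp_smul' (lam : ℝ) (f : EuclideanSpace ℝ (Fin n) → ℝ)
    (x v : EuclideanSpace ℝ (Fin n)) (hf : DifferentiableAt ℝ f (lam • x)) :
    fderiv ℝ (fun y => f (lam • y)) x v = lam * fderiv ℝ f (lam • x) v := by
  have hL : HasFDerivAt (fun y : EuclideanSpace ℝ (Fin n) => lam • y)
      (lam • ContinuousLinearMap.id ℝ _) x := (hasFDerivAt_id x).const_smul lam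
  have h : fderiv ℝ (fun y => f (lam • y)) x
      = (fderiv ℝ f (lam • x)).comp (lam • ContinuousLinearMap.id ℝ _) := by
    have := (hf.hasFDerivAt.comp x hL).fderiv
    exact this
  rw [h]
  simp [smul_eq_mul, mul_comm]

lemma fderiv_scaled (lam : ℝ) (hlam : lam ≠ 0) (f : EuclideanSpace ℝ (Fin n) → ℝ)
    (x v : EuclideanSpace ℝ (Fin n)) (hf : Differentiable ℝ f) :
    fderiv ℝ (fun y => lam⁻¹ * f (lam • y)) x v = fderiv ℝ f (lam • x) v := by
  have hc : DifferentiableAt ℝ (fun y : EuclideanSpace ℝ (Fin n) => f (lam • y)) x :=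
    (hf (lam • x)).comp x (differentiableAt_id.const_smul lam)
  rw [fderiv_const_mul hc]
  simp only [ContinuousLinearMap.smul_apply, smul_eq_mul]
  rw [fderiv_comp_smul' lam f x v (hf _)]
  field_simp

lemma sgrad_scaled (lam : ℝ) (hlam : lam ≠ 0) (f : EuclideanSpace ℝ (Fin n) → ℝ)
    (hf : ContDiff ℝ 2 f) (x : EuclideanSpace ℝ (Fin n)) :
    sgrad n (fun y => lam⁻¹ * f (lam • y)) x = sgrad n f (lam • x) := by
  unfold sgrad
  congr 1
  funext i
  exact fderiv_scaled lam hlam f x _ (hf.differentiable (by norm_num))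

lemma shess_scaled (lam : ℝ) (hlam : lam ≠ 0) (f : EuclideanSpace ℝ (Fin n) → ℝ)
    (hf : ContDiff ℝ 2 f) (x : EuclideanSpace ℝ (Fin n)) :
    shess n (fun y => lam⁻¹ * f (lam • y)) x = lam • shess n f (lam • x) := by
  have hf1 : Differentiable ℝ f := hf.differentiable (by norm_num)
  funext i j
  have hinner : (fun y => fderiv ℝ (fun z => lam⁻¹ * f (lam • z)) y (EuclideanSpace.single j 1))
      = fun y => fderiv ℝ f (lam • y) (EuclideanSpace.single j 1) := by
    funext y
    exact fderiv_scaled lam hlam f y _ hf1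
  have hdiff : Differentiable ℝ (fun y => fderiv ℝ f y (EuclideanSpace.single j 1)) := by
    have : ContDiff ℝ 1 (fun y => fderiv ℝ f y (EuclideanSpace.single j 1)) :=
      (hf.fderiv_right (by norm_num)).clm_apply contDiff_const
    exact this.differentiable one_ne_zero
  show fderiv ℝ _ x _ = _
  rw [hinner]
  rw [fderiv_comp_smul' lam _ x _ (hdiff _)]
  simp [shess, Matrix.smul_apply, smul_eq_mul]

/-- The key scaling step: `wb (lam • x) (lam² t) = lam * wb x t`. -/
lemma scaling_key (n : ℕ) (wb : EuclideanSpace ℝ (Fin n) → ℝ → ℝ)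
    (hsol : IsMCFSol n (fun x => ‖x‖) wb) (hlip : GlobLipX n wb)
    (huniq : ∀ w₁ w₂ : EuclideanSpace ℝ (Fin n) → ℝ → ℝ,
      IsMCFSol n (fun x => ‖x‖) w₁ → GlobLipX n w₁ →
      IsMCFSol n (fun x => ‖x‖) w₂ → GlobLipX n w₂ →
      ∀ x, ∀ t ∈ Ici (0:ℝ), w₁ x t = w₂ x t)
    (lam : ℝ) (hlam : 0 < lam) :
    ∀ x, ∀ t ∈ Ici (0:ℝ), wb (lam • x) (lam ^ 2 * t) = lam * wb x t := by
  have hlam0 : lam ≠ 0 := ne_of_gt hlam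
  set g : EuclideanSpace ℝ (Fin n) → ℝ → ℝ :=
    fun x t => lam⁻¹ * wb (lam • x) (lam ^ 2 * t) with hg
  obtain ⟨hcont, hC2, hC1, hpde, hinit⟩ := hsol
  have hsol' : IsMCFSol n (fun x => ‖x‖) wb := ⟨hcont, hC2, hC1, hpde, hinit⟩
  -- g is a solution
  have hgsol : IsMCFSol n (fun x => ‖x‖) g := by
    refine ⟨?_, ?_, ?_, ?_, ?_⟩
    · -- continuity
      have hφ : Continuous (fun q : EuclideanSpace ℝ (Fin n) × ℝ =>
          ((lam • q.1, lam ^ 2 * q.2) : EuclideanSpace ℝ (Fin n) × ℝ)) := by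
        fun_prop
      have hmaps : MapsTo (fun q : EuclideanSpace ℝ (Fin n) × ℝ =>
          ((lam • q.1, lam ^ 2 * q.2) : EuclideanSpace ℝ (Fin n) × ℝ))
          (univ ×ˢ Ici 0) (univ ×ˢ Ici 0) := by
        rintro ⟨x, t⟩ ⟨-, ht⟩
        exact ⟨trivial, mul_nonneg (sq_nonneg lam) ht⟩
      have := hcont.comp hφ.continuousOn hmaps
      exact continuousOn_const.mul this
    · -- C2 in x
      intro t ht
      have hs : lam ^ 2 * t ∈ Ioi (0:ℝ) := mul_pos (pow_pos hlam 2) ht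
      have := (hC2 _ hs).comp (contDiff_id.const_smul lam)
      exact contDiff_const.mul this
    · -- C1 in t
      intro x
      have hmaps : MapsTo (fun t : ℝ => lam ^ 2 * t) (Ioi 0) (Ioi 0) := fun t ht =>
        mul_pos (pow_pos hlam 2) ht
      have h1 : ContDiffOn ℝ 1 (fun t => wb (lam • x) (lam ^ 2 * t)) (Ioi 0) :=
        (hC1 (lam • x)).comp (contDiff_const.mul contDiff_id).contDiffOn hmaps
      exact contDiffOn_const.mul h1
    · -- PDE
      intro x t ht
      have hs : lam ^ 2 * t ∈ Ioi (0:ℝ) := mul_pos (pow_pos hlam 2) ht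
      set s := lam ^ 2 * t with hsdef
      set d := deriv (wb (lam • x)) s with hd
      have hdd : HasDerivAt (wb (lam • x)) d s := by
        have := ((hC1 (lam • x)).contDiffAt (Ioi_mem_nhds hs)).differentiableAt one_ne_zero
        exact this.hasDerivAt
      have hin : HasDerivAt (fun t : ℝ => lam ^ 2 * t) (lam ^ 2) t := by
        simpa using (hasDerivAt_id t).const_mul (lam ^ 2)
      have hcomp : HasDerivAt (fun t => wb (lam • x) (lam ^ 2 * t)) (d * lam ^ 2) t :=
        HasDerivAt.comp t hdd hin
      have hgd : HasDerivAt (g x) (lam⁻¹ * (d * lam ^ 2)) t := hcomp.const_mul lam⁻¹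
      rw [hgd.deriv]
      have hfC2 : ContDiff ℝ 2 (fun y => wb y s) := hC2 s hs
      have hgy : (fun y => g y t) = fun y => lam⁻¹ * wb (lam • y) s := rfl
      have hrhs : mcfPure n g x t = lam * mcfPure n wb (lam • x) s := by
        unfold mcfPure
        rw [hgy, sgrad_scaled lam hlam0 _ hfC2, shess_scaled lam hlam0 _ hfC2]
        rw [Matrix.mul_smul, Matrix.trace_smul]
        simp [smul_eq_mul]
      rw [hrhs, ← hpde (lam • x) s hs, ← hd]
      field_simp
    · -- initial data
      intro x
      have : g x 0 = lam⁻¹ * wb (lam • x) 0 := by simp [hg]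
      rw [this, hinit]
      show lam⁻¹ * ‖lam • x‖ = ‖x‖
      rw [norm_smul, Real.norm_eq_abs, abs_of_pos hlam]
      field_simp
  -- g is Lipschitz
  have hglip : GlobLipX n g := by
    obtain ⟨L, hL⟩ := hlip
    refine ⟨L, fun t ht => ?_⟩
    have hs : lam ^ 2 * t ∈ Ici (0:ℝ) := mul_nonneg (sq_nonneg lam) ht
    rw [lipschitzWith_iff_dist_le_mul]
    intro x y
    have h1 := (hL _ hs).dist_le_mul (lam • x) (lam • y)
    have h2 : dist (g x t) (g y t) = lam⁻¹ * dist (wb (lam • x) (lam ^ 2 * t))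
        (wb (lam • y) (lam ^ 2 * t)) := by
      simp only [hg, Real.dist_eq, ← mul_sub, abs_mul, abs_of_pos (inv_pos.mpr hlam)]
    have h3 : dist (lam • x) (lam • y) = lam * dist x y := by
      rw [dist_smul₀, Real.norm_eq_abs, abs_of_pos hlam]
    rw [h2]
    calc lam⁻¹ * dist (wb (lam • x) (lam ^ 2 * t)) (wb (lam • y) (lam ^ 2 * t))
        ≤ lam⁻¹ * (L * dist (lam • x) (lam • y)) := by
          apply mul_le_mul_of_nonneg_left h1 (le_of_lt (inv_pos.mpr hlam))
      _ = L * dist x y := by rw [h3]; field_simp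
  -- uniqueness
  intro x t ht
  have := huniq wb g hsol' hlip hgsol hglip x t ht
  rw [this]
  simp only [hg]
  field_simp

theorem stmt_12 (n : ℕ) (wb : EuclideanSpace ℝ (Fin n) → ℝ → ℝ)
    (hsol : IsMCFSol n (fun x => ‖x‖) wb) (hlip : GlobLipX n wb)
    (huniq : ∀ w₁ w₂ : EuclideanSpace ℝ (Fin n) → ℝ → ℝ,
      IsMCFSol n (fun x => ‖x‖) w₁ → GlobLipX n w₁ →
      IsMCFSol n (fun x => ‖x‖) w₂ → GlobLipX n w₂ →
      ∀ x, ∀ t ∈ Ici (0:ℝ), w₁ x t = w₂ x t) :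
    (∀ lam > (0:ℝ), ∀ x, ∀ t ∈ Ici (0:ℝ), wb (lam • x) (lam ^ 2 * t) = lam * wb x t) ∧
    (∀ t ∈ Ici (0:ℝ), wb 0 t = Real.sqrt t * wb 0 1) := by
  constructor
  · intro lam hlam x t ht
    exact scaling_key n wb hsol hlip huniq lam hlam x t ht
  · intro t ht
    rcases eq_or_lt_of_le (show (0:ℝ) ≤ t from ht) with h0 | h0
    · have h1 : wb 0 0 = ‖(0 : EuclideanSpace ℝ (Fin n))‖ := hsol.2.2.2.2 0
      rw [← h0, h1]
      simp
    · have hl : (0:ℝ) < Real.sqrt t := Real.sqrt_pos.mpr h0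
      have := scaling_key n wb hsol hlip huniq (Real.sqrt t) hl 0 1 (by norm_num)
      rw [smul_zero, Real.sq_sqrt (le_of_lt h0), mul_one] at this
      exact this
end AuxScaling
end
end
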